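/- Let M and M̂ be random variables on a finite set ℳ with joint distribution Q, where M is uniformly distributed on ℳ. If D(Q_{M̂} ‖ Q_M) ≤ δ, then |H(M) − H(M̂)| ≤ δ + √(2δ)·log|ℳ|. -/

import Mathlib

open Finset

open Classical in
/-- Kullback–Leibler divergence (base 2), summed over the support of the first argument. -/
noncomputable def KL {X : Type*} [Fintype X] (P Q : X → ℝ) : ℝ :=
  ∑ x, if 0 < P x then P x * Real.logb 2 (P x / Q x) else 0

/-- Shannon entropy (base 2) of a pmf on a finite alphabet. -/
noncomputable def ent {X : Type*} [Fintype X] (q : X → ℝ) : ℝ :=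
  -∑ x, q x * Real.logb 2 (q x)

/-- if `M` is uniform on the finite set `ℳ` and
`D(Q_M̂ ‖ Q_M) ≤ δ`, then `|H(M) − H(M̂)| ≤ δ + √(2δ)·log|ℳ|`. -/
theorem entropy_close_of_kl_small {M : Type*} [Fintype M] [Nonempty M]
    (QM QMhat : M → ℝ)
    (hQM : ∀ m, QM m = (Fintype.card M : ℝ)⁻¹)
    (hQMhat : (∀ m, 0 ≤ QMhat m) ∧ ∑ m, QMhat m = 1)
    (δ : ℝ) (hKL : KL QMhat QM ≤ δ) :
    |ent QM - ent QMhat| ≤ δ + Real.sqrt (2 * δ) * Real.logb 2 (Fintype.card M) := by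
  classical
  obtain ⟨hP0, hP1⟩ := hQMhat
  set c : ℝ := (Fintype.card M : ℝ) with hcdef
  have hcard : 0 < Fintype.card M := Fintype.card_pos
  have hcpos : 0 < c := by rw [hcdef]; exact_mod_cast hcard
  have hc1 : (1 : ℝ) ≤ c := by rw [hcdef]; exact_mod_cast Nat.one_le_iff_ne_zero.mpr hcard.ne'
  have hclog : 0 ≤ Real.logb 2 c := Real.logb_nonneg one_lt_two hc1
  -- entropy of the uniform distribution
  have hent : ent QM = Real.logb 2 c := by
    simp only [ent, hQM]
    rw [Finset.sum_const, Finset.card_univ, nsmul_eq_mul, Real.logb_inv]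
    rw [← hcdef]
    field_simp
  -- KL = ent QM - ent QMhat
  have hKLeq : KL QMhat QM = ent QM - ent QMhat := by
    have hterm : ∀ m, (if 0 < QMhat m then QMhat m * Real.logb 2 (QMhat m / QM m) else 0)
        = QMhat m * Real.logb 2 (QMhat m) + QMhat m * Real.logb 2 c := by
      intro m
      rcases (hP0 m).lt_or_eq with h | h
      · rw [if_pos h, hQM, div_eq_mul_inv, inv_inv, Real.logb_mul h.ne' hcpos.ne', mul_add]
      · simp [← h]
    rw [KL, Finset.sum_congr rfl (fun m _ => hterm m), Finset.sum_add_distrib,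
      ← Finset.sum_mul, hP1, one_mul, hent, ent]
    ring
  -- KL ≥ 0 (Gibbs' inequality)
  have hKL0 : 0 ≤ KL QMhat QM := by
    have hlog2 : 0 < Real.log 2 := Real.log_pos one_lt_two
    have hterm : ∀ m, (if 0 < QMhat m then (QMhat m - c⁻¹) else 0) / Real.log 2
        ≤ (if 0 < QMhat m then QMhat m * Real.logb 2 (QMhat m / QM m) else 0) := by
      intro m
      by_cases h : 0 < QMhat m
      · have hrw : QMhat m / c⁻¹ = QMhat m * c := by field_simp
        rw [if_pos h, if_pos h, hQM, hrw, Real.logb, ← mul_div_assoc]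
        apply div_le_div_of_nonneg_right (c := Real.log 2) _ hlog2.le
        have hpc : 0 < QMhat m * c := mul_pos h hcpos
        have := Real.log_le_sub_one_of_pos (inv_pos.mpr hpc)
        rw [Real.log_inv] at this
        have hlb : 1 - (QMhat m * c)⁻¹ ≤ Real.log (QMhat m * c) := by linarith
        have : QMhat m * (1 - (QMhat m * c)⁻¹) ≤ QMhat m * Real.log (QMhat m * c) :=
          mul_le_mul_of_nonneg_left hlb h.le
        calc QMhat m - c⁻¹ = QMhat m * (1 - (QMhat m * c)⁻¹) := by
              field_simp
            _ ≤ QMhat m * Real.log (QMhat m * c) := this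
      · simp [if_neg h]
    have hsum : 0 ≤ ∑ m, (if 0 < QMhat m then (QMhat m - c⁻¹) else 0) / Real.log 2 := by
      rw [← Finset.sum_div]
      apply div_nonneg _ hlog2.le
      set S := Finset.univ.filter (fun m => 0 < QMhat m) with hS
      rw [Finset.sum_ite, Finset.sum_const, smul_zero, add_zero]
      have hsumS : ∑ m ∈ S, QMhat m = 1 := by
        rw [← hP1]
        apply Finset.sum_filter_of_ne
        intro m _ hne
        exact lt_of_le_of_ne (hP0 m) (Ne.symm hne)
      rw [Finset.sum_sub_distrib, hsumS, Finset.sum_const, nsmul_eq_mul]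
      have hScard : (S.card : ℝ) ≤ c := by
        rw [hcdef]
        exact_mod_cast (Finset.card_filter_le _ _).trans_eq Finset.card_univ
      have : (S.card : ℝ) * c⁻¹ ≤ c * c⁻¹ :=
        mul_le_mul_of_nonneg_right hScard (inv_nonneg.mpr hcpos.le)
      rw [mul_inv_cancel₀ hcpos.ne'] at this
      linarith
    calc (0:ℝ) ≤ ∑ m, (if 0 < QMhat m then (QMhat m - c⁻¹) else 0) / Real.log 2 := hsum
      _ ≤ KL QMhat QM := Finset.sum_le_sum (fun m _ => hterm m)
  have hδ : 0 ≤ δ := hKL0.trans hKL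
  have hsqrt : 0 ≤ Real.sqrt (2 * δ) := Real.sqrt_nonneg _
  have habs : |ent QM - ent QMhat| = KL QMhat QM := by
    rw [hKLeq]; exact abs_of_nonneg (by rw [← hKLeq]; exact hKL0)
  rw [habs]
  nlinarith [mul_nonneg hsqrt hclog]
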